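/- Let F be a hereditary family of finite subsets of ℕ. Then F is closed in the topology of pointwise convergence if and only if there is no infinite subset M of ℕ with [M]^{<ω} ⊆ F. -/
import Mathlib


/-- The characteristic function of a finite set, as an element of `{0,1}^ℕ`. -/
def charFinset (s : Finset ℕ) : ℕ → Bool := fun n => decide (n ∈ s)

lemma agree_open (f : ℕ → Bool) (A : Finset ℕ) :
    IsOpen {g : ℕ → Bool | ∀ n ∈ A, g n = f n} := by
  have h : {g : ℕ → Bool | ∀ n ∈ A, g n = f n}
      = ⋂ n ∈ A, (fun g : ℕ → Bool => g n) ⁻¹' {f n} := by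
    ext g; simp
  rw [h]
  exact isOpen_biInter_finset fun n _ =>
    (continuous_apply n).isOpen_preimage _ (isOpen_discrete _)

/-- A hereditary family `F` of finite subsets of `ℕ` is pointwise closed iff there is no
infinite `M ⊆ ℕ` with all finite subsets of `M` in `F`. -/
theorem hereditary_closed_iff (F : Set (Finset ℕ))
    (hF : ∀ t ∈ F, ∀ s ⊆ t, s ∈ F) :
    IsClosed (charFinset '' F) ↔
      ¬ ∃ M : Set ℕ, M.Infinite ∧ ∀ s : Finset ℕ, ↑s ⊆ M → s ∈ F := by
  classical
  constructor
  · rintro h ⟨M, hM, hsub⟩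
    set χ : ℕ → Bool := fun n => decide (n ∈ M) with hχ
    have hcl : χ ∈ closure (charFinset '' F) := by
      rw [mem_closure_iff]
      intro O hO hmem
      obtain ⟨I, u, hu, hpi⟩ := isOpen_pi_iff.mp hO χ hmem
      refine ⟨charFinset (I.filter (fun n => n ∈ M)), ?_, ?_⟩
      · apply hpi
        intro n hn
        have : charFinset (I.filter (fun n => n ∈ M)) n = χ n := by
          have hnI : n ∈ I := hn
          simp [charFinset, hχ, Finset.mem_filter, hnI]
        rw [this]
        exact (hu n hn).2
      · exact ⟨_, hsub _ (by intro n hn; simpa using (Finset.mem_filter.mp hn).2), rfl⟩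
    have : χ ∈ charFinset '' F := h.closure_subset hcl
    obtain ⟨t, _, ht⟩ := this
    apply hM
    have : M = ↑t := by
      ext n
      have := congrFun ht n
      simp only [charFinset, hχ, decide_eq_decide] at this
      exact ⟨fun h' => this.mpr h', fun h' => this.mp h'⟩
    rw [this]
    exact t.finite_toSet
  · intro hno
    refine isClosed_of_closure_subset fun f hf => ?_
    have key : ∀ A : Finset ℕ, ∃ t ∈ F, ∀ n ∈ A, charFinset t n = f n := by
      intro A
      obtain ⟨g, hgO, t, ht, rfl⟩ :=
        mem_closure_iff.mp hf _ (agree_open f A) (fun n _ => rfl)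
      exact ⟨t, ht, hgO⟩
    have hsubF : ∀ s : Finset ℕ, (∀ n ∈ s, f n = true) → s ∈ F := by
      intro s hs
      obtain ⟨t, ht, hagree⟩ := key s
      refine hF t ht s fun n hn => ?_
      have h1 := hagree n hn
      rw [hs n hn] at h1
      simpa [charFinset] using h1
    have hS : {n | f n = true}.Finite := by
      by_contra hinf
      exact hno ⟨{n | f n = true}, hinf,
        fun s hs => hsubF s fun n hn => hs (Finset.mem_coe.mpr hn)⟩
    refine ⟨hS.toFinset, hsubF _ (fun n hn => (Set.Finite.mem_toFinset hS).mp hn), ?_⟩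
    funext n
    cases hfn : f n <;> simp [charFinset, Set.Finite.mem_toFinset, hfn]
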